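/- (Theorem 7, key computation) Let n ≥ 5 and consider the comparison array where for all pairs (i,j) with i < j except (1,2), (1,4), (2,3), there is one comparison with r_{ij} = r_max and r_{ji} = r_min = −r_max. Let ρ be the linear order X_1 ≻ X_2 ≻ X_3 ≻ X_4 ≻ X_5 ≻ ... ≻ X_n and ρ' the weak order X_1 ∼ X_2 ≻ X_3 ≻ X_4 ≻ ... ≻ X_n. Then the β-Least-Squares objective f(σ) = ∑_{(i,j) compared} (r_{ij} − β(σ(i) − σ(j)))² satisfies f(ρ) − f(ρ') = 4β²(n − 5). In particular for n > 5, ρ is not optimal for β-LS. -/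
import Mathlib


open scoped Classical

noncomputable def gA (a b : ℝ) (i j : ℕ) : ℝ :=
  (if i = 0 ∧ 2 ≤ j ∧ j ≠ 3 then -2*a*b + b^2*(4*(j:ℝ)-1) else 0)
  + (if i = 1 ∧ 3 ≤ j then 2*a*b - b^2*(4*(j:ℝ)-3) else 0)
  + (if j = 0 ∧ 2 ≤ i ∧ i ≠ 3 then -2*a*b + b^2*(4*(i:ℝ)-1) else 0)
  + (if j = 1 ∧ 3 ≤ i then 2*a*b - b^2*(4*(i:ℝ)-3) else 0)

lemma sumLin (c d : ℝ) : ∀ n : ℕ, ∑ j ∈ Finset.range n, (c + d * (j:ℝ))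
    = c * n + d * (n * ((n:ℝ) - 1) / 2)
  | 0 => by simp
  | (n+1) => by
      rw [Finset.sum_range_succ, sumLin c d n]; push_cast; ring

lemma gA_sum (a b : ℝ) (n : ℕ) (hn : 5 ≤ n) :
    ∑ i ∈ Finset.range n, ∑ j ∈ Finset.range n, gA a b i j = 4 * b^2 * ((n:ℝ) - 5) := by
  have h0 : (0:ℕ) ∈ Finset.range n := by simp; omega
  have h1 : (1:ℕ) ∈ Finset.range n := by simp; omega
  have T1 : (∑ i ∈ Finset.range n, ∑ j ∈ Finset.range n,
        (if i = 0 ∧ 2 ≤ j ∧ j ≠ 3 then -2*a*b + b^2*(4*(j:ℝ)-1) else 0))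
      = ∑ j ∈ Finset.range n, (if 2 ≤ j ∧ j ≠ 3 then -2*a*b + b^2*(4*(j:ℝ)-1) else 0) := by
    rw [show (∑ i ∈ Finset.range n, ∑ j ∈ Finset.range n,
          (if i = 0 ∧ 2 ≤ j ∧ j ≠ 3 then -2*a*b + b^2*(4*(j:ℝ)-1) else 0))
        = ∑ i ∈ Finset.range n, (if i = 0 then
            (∑ j ∈ Finset.range n, if 2 ≤ j ∧ j ≠ 3 then -2*a*b + b^2*(4*(j:ℝ)-1) else 0) else 0) from
        Finset.sum_congr rfl fun i _ => by by_cases h : i = 0 <;> simp [h]]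
    rw [Finset.sum_ite_eq' (Finset.range n) 0, if_pos h0]
  have T2 : (∑ i ∈ Finset.range n, ∑ j ∈ Finset.range n,
        (if i = 1 ∧ 3 ≤ j then 2*a*b - b^2*(4*(j:ℝ)-3) else 0))
      = ∑ j ∈ Finset.range n, (if 3 ≤ j then 2*a*b - b^2*(4*(j:ℝ)-3) else 0) := by
    rw [show (∑ i ∈ Finset.range n, ∑ j ∈ Finset.range n,
          (if i = 1 ∧ 3 ≤ j then 2*a*b - b^2*(4*(j:ℝ)-3) else 0))
        = ∑ i ∈ Finset.range n, (if i = 1 then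
            (∑ j ∈ Finset.range n, if 3 ≤ j then 2*a*b - b^2*(4*(j:ℝ)-3) else 0) else 0) from
        Finset.sum_congr rfl fun i _ => by by_cases h : i = 1 <;> simp [h]]
    rw [Finset.sum_ite_eq' (Finset.range n) 1, if_pos h1]
  have T3 : (∑ i ∈ Finset.range n, ∑ j ∈ Finset.range n,
        (if j = 0 ∧ 2 ≤ i ∧ i ≠ 3 then -2*a*b + b^2*(4*(i:ℝ)-1) else 0))
      = ∑ i ∈ Finset.range n, (if 2 ≤ i ∧ i ≠ 3 then -2*a*b + b^2*(4*(i:ℝ)-1) else 0) := by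
    refine Finset.sum_congr rfl fun i _ => ?_
    rw [show (∑ j ∈ Finset.range n, (if j = 0 ∧ 2 ≤ i ∧ i ≠ 3 then -2*a*b + b^2*(4*(i:ℝ)-1) else 0))
        = ∑ j ∈ Finset.range n, (if j = 0 then (if 2 ≤ i ∧ i ≠ 3 then -2*a*b + b^2*(4*(i:ℝ)-1) else 0) else 0) from
        Finset.sum_congr rfl fun j _ => by by_cases h : j = 0 <;> simp [h]]
    rw [Finset.sum_ite_eq' (Finset.range n) 0, if_pos h0]
  have T4 : (∑ i ∈ Finset.range n, ∑ j ∈ Finset.range n,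
        (if j = 1 ∧ 3 ≤ i then 2*a*b - b^2*(4*(i:ℝ)-3) else 0))
      = ∑ i ∈ Finset.range n, (if 3 ≤ i then 2*a*b - b^2*(4*(i:ℝ)-3) else 0) := by
    refine Finset.sum_congr rfl fun i _ => ?_
    rw [show (∑ j ∈ Finset.range n, (if j = 1 ∧ 3 ≤ i then 2*a*b - b^2*(4*(i:ℝ)-3) else 0))
        = ∑ j ∈ Finset.range n, (if j = 1 then (if 3 ≤ i then 2*a*b - b^2*(4*(i:ℝ)-3) else 0) else 0) from
        Finset.sum_congr rfl fun j _ => by by_cases h : j = 1 <;> simp [h]]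
    rw [Finset.sum_ite_eq' (Finset.range n) 1, if_pos h1]
  have split : ∑ i ∈ Finset.range n, ∑ j ∈ Finset.range n, gA a b i j
      = (∑ i ∈ Finset.range n, ∑ j ∈ Finset.range n,
        (if i = 0 ∧ 2 ≤ j ∧ j ≠ 3 then -2*a*b + b^2*(4*(j:ℝ)-1) else 0))
      + (∑ i ∈ Finset.range n, ∑ j ∈ Finset.range n,
        (if i = 1 ∧ 3 ≤ j then 2*a*b - b^2*(4*(j:ℝ)-3) else 0))
      + (∑ i ∈ Finset.range n, ∑ j ∈ Finset.range n,
        (if j = 0 ∧ 2 ≤ i ∧ i ≠ 3 then -2*a*b + b^2*(4*(i:ℝ)-1) else 0))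
      + (∑ i ∈ Finset.range n, ∑ j ∈ Finset.range n,
        (if j = 1 ∧ 3 ≤ i then 2*a*b - b^2*(4*(i:ℝ)-3) else 0)) := by
    unfold gA
    simp [Finset.sum_add_distrib]
  rw [split, T1, T2, T3, T4]
  have hmem : ∀ k : ℕ, k < 5 → k ∈ Finset.range n := fun k hk => by simp; omega
  have S1 : (∑ j ∈ Finset.range n, if 2 ≤ j ∧ j ≠ 3 then -2*a*b + b^2*(4*(j:ℝ)-1) else 0)
      = (∑ j ∈ Finset.range n, ((-2*a*b - b^2) + (4*b^2) * (j:ℝ)))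
        - (-2*a*b - b^2) - (-2*a*b + 3*b^2) - (-2*a*b + 11*b^2) := by
    have pt : ∀ j : ℕ, (if 2 ≤ j ∧ j ≠ 3 then -2*a*b + b^2*(4*(j:ℝ)-1) else 0)
        = ((-2*a*b - b^2) + (4*b^2) * (j:ℝ))
          - (if j = 0 then (-2*a*b - b^2) else 0)
          - (if j = 1 then (-2*a*b + 3*b^2) else 0)
          - (if j = 3 then (-2*a*b + 11*b^2) else 0) := by
      intro j
      by_cases h0 : j = 0
      · subst h0; norm_num <;> ring
      by_cases h1 : j = 1
      · subst h1; norm_num <;> ring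
      by_cases h3 : j = 3
      · subst h3; norm_num <;> ring
      · rw [if_pos (by omega : 2 ≤ j ∧ j ≠ 3), if_neg h0, if_neg h1, if_neg h3]; ring
    rw [Finset.sum_congr rfl fun j _ => pt j]
    rw [Finset.sum_sub_distrib, Finset.sum_sub_distrib, Finset.sum_sub_distrib,
      Finset.sum_ite_eq' (Finset.range n) 0, Finset.sum_ite_eq' (Finset.range n) 1,
      Finset.sum_ite_eq' (Finset.range n) 3,
      if_pos (hmem 0 (by norm_num)), if_pos (hmem 1 (by norm_num)), if_pos (hmem 3 (by norm_num))]
  have S2 : (∑ j ∈ Finset.range n, if 3 ≤ j then 2*a*b - b^2*(4*(j:ℝ)-3) else 0)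
      = (∑ j ∈ Finset.range n, ((2*a*b + 3*b^2) + (-4*b^2) * (j:ℝ)))
        - (2*a*b + 3*b^2) - (2*a*b - b^2) - (2*a*b - 5*b^2) := by
    have pt : ∀ j : ℕ, (if 3 ≤ j then 2*a*b - b^2*(4*(j:ℝ)-3) else 0)
        = ((2*a*b + 3*b^2) + (-4*b^2) * (j:ℝ))
          - (if j = 0 then (2*a*b + 3*b^2) else 0)
          - (if j = 1 then (2*a*b - b^2) else 0)
          - (if j = 2 then (2*a*b - 5*b^2) else 0) := by
      intro j
      by_cases h0 : j = 0
      · subst h0; norm_num <;> ring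
      by_cases h1 : j = 1
      · subst h1; norm_num <;> ring
      by_cases h2 : j = 2
      · subst h2; norm_num <;> ring
      · rw [if_pos (by omega : 3 ≤ j), if_neg h0, if_neg h1, if_neg h2]; ring
    rw [Finset.sum_congr rfl fun j _ => pt j]
    rw [Finset.sum_sub_distrib, Finset.sum_sub_distrib, Finset.sum_sub_distrib,
      Finset.sum_ite_eq' (Finset.range n) 0, Finset.sum_ite_eq' (Finset.range n) 1,
      Finset.sum_ite_eq' (Finset.range n) 2,
      if_pos (hmem 0 (by norm_num)), if_pos (hmem 1 (by norm_num)), if_pos (hmem 2 (by norm_num))]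
  rw [S1, S2, sumLin, sumLin]
  ring

/-- Theorem 7 (key computation): for the array in which every pair `i < j` except
`(1,2)`, `(1,4)`, `(2,3)` is compared once with `r_{ij} = rmax`, `r_{ji} = -rmax`,
the β-LS objective satisfies `f(ρ) - f(ρ') = 4β²(n-5)`, where `ρ` is the linear
order `X₁ ≻ X₂ ≻ ⋯ ≻ Xₙ` (Copeland indices `ρ(i) = n + 1 - 2i`) and `ρ'` ties
`X₁ ∼ X₂` above `X₃ ≻ ⋯ ≻ Xₙ`. In particular, for `n > 5` the order `ρ` is not
optimal for β-LS. -/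
theorem stmt14 (n : ℕ) (hn : 5 ≤ n) (β : ℝ) (hβ : 0 < β) (rmax : ℝ) (hrmax : 0 < rmax)
    (cmp : Fin n → Fin n → Prop)
    (hcmp : ∀ i j : Fin n, cmp i j ↔ (i ≠ j ∧
      ¬((i.val = 0 ∧ j.val = 1) ∨ (i.val = 1 ∧ j.val = 0) ∨
        (i.val = 0 ∧ j.val = 3) ∨ (i.val = 3 ∧ j.val = 0) ∨
        (i.val = 1 ∧ j.val = 2) ∨ (i.val = 2 ∧ j.val = 1))))
    (R : Fin n → Fin n → ℝ)
    (hR : ∀ i j : Fin n, cmp i j → R i j = if i < j then rmax else -rmax)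
    (ρ ρ' : Fin n → ℝ)
    (hρ : ∀ i : Fin n, ρ i = (n : ℝ) - 1 - 2 * (i.val : ℝ))
    (hρ' : ∀ i : Fin n, (i.val = 0 ∨ i.val = 1 → ρ' i = (n : ℝ) - 2) ∧
      (2 ≤ i.val → ρ' i = (n : ℝ) - 1 - 2 * (i.val : ℝ))) :
    let f : (Fin n → ℝ) → ℝ := fun σ =>
      ∑ i, ∑ j, if cmp i j then (R i j - β * (σ i - σ j)) ^ 2 else 0
    f ρ - f ρ' = 4 * β ^ 2 * ((n : ℝ) - 5) ∧ (5 < n → f ρ' < f ρ) := by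
  intro f
  have hkey : ∀ i j : Fin n,
      (if cmp i j then (R i j - β * (ρ i - ρ j)) ^ 2 else 0)
      - (if cmp i j then (R i j - β * (ρ' i - ρ' j)) ^ 2 else 0)
      = gA rmax β i.val j.val := by
    intro i j
    by_cases hbig : 2 ≤ i.val ∧ 2 ≤ j.val
    · obtain ⟨hi2, hj2⟩ := hbig
      have e1 : ρ' i = ρ i := by rw [(hρ' i).2 hi2, hρ i]
      have e2 : ρ' j = ρ j := by rw [(hρ' j).2 hj2, hρ j]
      rw [e1, e2, sub_self]
      have a1 : i.val ≠ 0 := by omega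
      have a2 : i.val ≠ 1 := by omega
      have a3 : j.val ≠ 0 := by omega
      have a4 : j.val ≠ 1 := by omega
      simp [gA, a1, a2, a3, a4]
    · have hsm : i.val ≤ 1 ∨ j.val ≤ 1 := by omega
      rcases Nat.lt_or_ge i.val 2 with hi | hi
      · -- i.val = 0 or 1
        have hi01 : i.val = 0 ∨ i.val = 1 := by omega
        rcases hi01 with hp | hp
        · -- i.val = 0
          have hq : j.val = 0 ∨ j.val = 1 ∨ j.val = 3 ∨ (2 ≤ j.val ∧ j.val ≠ 3) := by omega
          rcases hq with hq | hq | hq | ⟨hq1, hq2⟩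
          · have hnc : ¬ cmp i j := fun h => ((hcmp i j).1 h).1 (Fin.ext (by omega))
            norm_num [hnc, gA, hp, hq]
          · have hnc : ¬ cmp i j := fun h => ((hcmp i j).1 h).2 (Or.inl ⟨hp, hq⟩)
            norm_num [hnc, gA, hp, hq]
          · have hnc : ¬ cmp i j := fun h =>
              ((hcmp i j).1 h).2 (Or.inr (Or.inr (Or.inl ⟨hp, hq⟩)))
            norm_num [hnc, gA, hp, hq]
          · have hc : cmp i j := (hcmp i j).2
              ⟨Fin.ne_of_val_ne (by omega), by omega⟩
            have hlt : i < j := by rw [Fin.lt_def]; omega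
            have hRv := hR i j hc
            rw [if_pos hlt] at hRv
            rw [if_pos hc, if_pos hc, hRv, hρ i, hρ j,
              (hρ' i).1 (Or.inl hp), (hρ' j).2 hq1]
            have a3 : j.val ≠ 0 := by omega
            have a4 : j.val ≠ 1 := by omega
            simp only [gA]
            rw [if_pos ⟨hp, hq1, hq2⟩, if_neg (by omega), if_neg (by omega), if_neg (by omega), hp]
            push_cast
            ring
        · -- i.val = 1
          have hq : j.val = 0 ∨ j.val = 1 ∨ j.val = 2 ∨ 3 ≤ j.val := by omega
          rcases hq with hq | hq | hq | hq
          · have hnc : ¬ cmp i j := fun h =>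
              ((hcmp i j).1 h).2 (Or.inr (Or.inl ⟨hp, hq⟩))
            norm_num [hnc, gA, hp, hq]
          · have hnc : ¬ cmp i j := fun h => ((hcmp i j).1 h).1 (Fin.ext (by omega))
            norm_num [hnc, gA, hp, hq]
          · have hnc : ¬ cmp i j := fun h =>
              ((hcmp i j).1 h).2 (Or.inr (Or.inr (Or.inr (Or.inr (Or.inl ⟨hp, hq⟩)))))
            norm_num [hnc, gA, hp, hq]
          · have hc : cmp i j := (hcmp i j).2
              ⟨Fin.ne_of_val_ne (by omega), by omega⟩
            have hlt : i < j := by rw [Fin.lt_def]; omega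
            have hRv := hR i j hc
            rw [if_pos hlt] at hRv
            rw [if_pos hc, if_pos hc, hRv, hρ i, hρ j,
              (hρ' i).1 (Or.inr hp), (hρ' j).2 (by omega)]
            simp only [gA]
            rw [if_neg (by omega), if_pos ⟨hp, hq⟩, if_neg (by omega), if_neg (by omega), hp]
            push_cast
            ring
      · -- 2 ≤ i.val, j.val ≤ 1
        have hj01 : j.val = 0 ∨ j.val = 1 := by omega
        rcases hj01 with hq | hq
        · by_cases hp3 : i.val = 3
          · have hnc : ¬ cmp i j := fun h =>
              ((hcmp i j).1 h).2 (Or.inr (Or.inr (Or.inr (Or.inl ⟨hp3, hq⟩))))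
            norm_num [hnc, gA, hp3, hq]
          · have hc : cmp i j := (hcmp i j).2
              ⟨Fin.ne_of_val_ne (by omega), by omega⟩
            have hlt : ¬ i < j := by rw [Fin.lt_def]; omega
            have hRv := hR i j hc
            rw [if_neg hlt] at hRv
            rw [if_pos hc, if_pos hc, hRv, hρ i, hρ j,
              (hρ' j).1 (Or.inl hq), (hρ' i).2 hi]
            simp only [gA]
            rw [if_neg (by omega), if_neg (by omega), if_pos ⟨hq, hi, hp3⟩, if_neg (by omega), hq]
            push_cast
            ring
        · by_cases hp2 : i.val = 2
          · have hnc : ¬ cmp i j := fun h =>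
              ((hcmp i j).1 h).2 (Or.inr (Or.inr (Or.inr (Or.inr (Or.inr ⟨hp2, hq⟩)))))
            norm_num [hnc, gA, hp2, hq]
          · have hp3 : 3 ≤ i.val := by omega
            have hc : cmp i j := (hcmp i j).2
              ⟨Fin.ne_of_val_ne (by omega), by omega⟩
            have hlt : ¬ i < j := by rw [Fin.lt_def]; omega
            have hRv := hR i j hc
            rw [if_neg hlt] at hRv
            rw [if_pos hc, if_pos hc, hRv, hρ i, hρ j,
              (hρ' j).1 (Or.inr hq), (hρ' i).2 hi]
            simp only [gA]
            rw [if_neg (by omega), if_neg (by omega), if_neg (by omega), if_pos ⟨hq, hp3⟩, hq]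
            push_cast
            ring
  have hmain : f ρ - f ρ' = 4 * β ^ 2 * ((n : ℝ) - 5) := by
    have h1 : f ρ - f ρ' = ∑ i : Fin n, ∑ j : Fin n, gA rmax β i.val j.val := by
      show (∑ i : Fin n, ∑ j : Fin n, _) - (∑ i : Fin n, ∑ j : Fin n, _) = _
      rw [← Finset.sum_sub_distrib]
      refine Finset.sum_congr rfl fun i _ => ?_
      rw [← Finset.sum_sub_distrib]
      exact Finset.sum_congr rfl fun j _ => hkey i j
    have h2 : ∑ i : Fin n, ∑ j : Fin n, gA rmax β i.val j.val
        = ∑ i ∈ Finset.range n, ∑ j ∈ Finset.range n, gA rmax β i j := by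
      rw [show (∑ i : Fin n, ∑ j : Fin n, gA rmax β i.val j.val)
          = ∑ i : Fin n, ∑ j ∈ Finset.range n, gA rmax β i.val j from
        Finset.sum_congr rfl fun i _ => Fin.sum_univ_eq_sum_range (fun j => gA rmax β i.val j) n]
      exact Fin.sum_univ_eq_sum_range (fun i => ∑ j ∈ Finset.range n, gA rmax β i j) n
    rw [h1, h2, gA_sum rmax β n hn]
  refine ⟨hmain, fun h5 => ?_⟩
  have hn5 : (5:ℝ) < (n:ℝ) := by exact_mod_cast h5
  have hpos : 0 < 4 * β ^ 2 * ((n : ℝ) - 5) := by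
    apply mul_pos (by positivity)
    linarith
  linarith
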